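/- Let a, b, c be integers with d = b² - 4ac, and assume there is no integer k with d = -k². Then the set of primes q with q ≡ 3 (mod 4) such that q divides a·n² + b·n + c for some integer n is infinite. -/

import Mathlib

private theorem lub_E (d₀ : ℤ) (M r : ℕ) (hM : M ≠ 0) (h4 : 4 ∣ M)
    (hr : Nat.Coprime r M) (hr4 : r % 4 = 3)
    (H : ∀ p : ℕ, p.Prime → p ≡ r [MOD M] → jacobiSym d₀ p = 1) :
    {q : ℕ | q.Prime ∧ q % 4 = 3 ∧ jacobiSym d₀ q = 1}.Infinite := by
  haveI : NeZero M := ⟨hM⟩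
  have hinf := Nat.infinite_setOfPred_prime_and_eq_mod (q := M) (a := (r : ZMod M))
    ((ZMod.isUnit_iff_coprime r M).mpr hr)
  refine hinf.mono ?_
  rintro p ⟨hp, hpr⟩
  have hmod : p ≡ r [MOD M] := (ZMod.natCast_eq_natCast_iff p r M).mp hpr
  have h4' : p % 4 = r % 4 := hmod.of_dvd h4
  have hp4 : p % 4 = 3 := by omega
  exact ⟨hp, hp4, H p hp hmod⟩

private theorem lub_F (u : ℕ) (hu : Odd u) (hsf : Squarefree u) (h1 : 1 < u) (τ : ℤ)
    (hτ : τ = 1 ∨ τ = -1) :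
    ∃ v : ℕ, jacobiSym (v : ℤ) u = τ := by
  rcases hτ with rfl | rfl
  · exact ⟨1, by simp⟩
  · obtain ⟨q, hq, hqu⟩ := Nat.exists_prime_and_dvd (by omega : u ≠ 1)
    have hu2 : ¬ (2:ℕ) ∣ u := by have := Nat.odd_iff.mp hu; omega
    have hq2 : q ≠ 2 := by rintro rfl; exact hu2 hqu
    have hu0 : u ≠ 0 := by omega
    set w := u / q with hwdef
    have hw : q * w = u := Nat.mul_div_cancel' hqu
    have hw0 : w ≠ 0 := by intro h; rw [h, Nat.mul_zero] at hw; omega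
    have hqw : Nat.Coprime q w := by
      rw [hq.coprime_iff_not_dvd]
      intro h
      have : q * q ∣ u := by rw [← hw]; exact mul_dvd_mul_left q h
      exact hq.ne_one (Nat.isUnit_iff.mp (hsf q this))
    haveI : Fact q.Prime := ⟨hq⟩
    obtain ⟨z, hz⟩ := FiniteField.exists_nonsquare
      (F := ZMod q) (by rw [ZMod.ringChar_zmod_n]; exact hq2)
    obtain ⟨v, hv1, hv2⟩ := Nat.chineseRemainder hqw z.val 1
    refine ⟨v, ?_⟩
    have hcast : ((z.val : ℤ) : ZMod q) = z := by
      push_cast [ZMod.natCast_val, ZMod.cast_id]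
      try rfl
    have hleg : legendreSym q (z.val : ℤ) = -1 := by
      rw [legendreSym.eq_neg_one_iff, hcast]; exact hz
    have hJq : jacobiSym (v : ℤ) q = -1 := by
      have hmm : (v : ℤ) % (q : ℤ) = ((z.val : ℕ) : ℤ) % (q : ℤ) := by
        have h1 : v % q = z.val % q := hv1
        exact_mod_cast congrArg (Nat.cast : ℕ → ℤ) h1
      rw [jacobiSym.mod_left' hmm, ← jacobiSym.legendreSym.to_jacobiSym]
      exact hleg
    have hJw : jacobiSym (v : ℤ) w = 1 := by
      have hmm : (v : ℤ) % (w : ℤ) = ((1 : ℕ) : ℤ) % (w : ℤ) := by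
        have h1 : v % w = 1 % w := hv2
        exact_mod_cast congrArg (Nat.cast : ℕ → ℤ) h1
      rw [jacobiSym.mod_left' hmm]
      simp
    calc jacobiSym (v : ℤ) u = jacobiSym (v : ℤ) (q * w) := by rw [hw]
      _ = jacobiSym (v : ℤ) q * jacobiSym (v : ℤ) w :=
          jacobiSym.mul_right' _ hq.ne_zero hw0
      _ = -1 := by rw [hJq, hJw]; ring

private theorem lub_W (d₀ : ℤ) (u : ℕ) (hu : Odd u) (h1 : 1 < u) (hsf : Squarefree u)
    (τ : ℤ) (hτ : τ = 1 ∨ τ = -1)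
    (H : ∀ p : ℕ, p.Prime → p % 8 = 7 → jacobiSym (p : ℤ) u = τ → jacobiSym d₀ p = 1) :
    {q : ℕ | q.Prime ∧ q % 4 = 3 ∧ jacobiSym d₀ q = 1}.Infinite := by
  obtain ⟨v, hv⟩ := lub_F u hu hsf h1 τ hτ
  have hvu : Nat.Coprime v u := by
    haveI : NeZero u := ⟨by omega⟩
    have hJne : jacobiSym (v : ℤ) u ≠ 0 := by
      rw [hv]; rcases hτ with rfl | rfl <;> norm_num
    have : Int.gcd (v : ℤ) (u : ℤ) = 1 := by
      by_contra h
      exact hJne (jacobiSym.eq_zero_iff_not_coprime.mpr h)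
    rwa [Int.gcd_natCast_natCast] at this
  have hcop : Nat.Coprime 8 u := by
    have h2 := Nat.odd_iff.mp hu
    have hu8 : u % 8 = 1 ∨ u % 8 = 3 ∨ u % 8 = 5 ∨ u % 8 = 7 := by omega
    show Nat.gcd 8 u = 1
    rw [Nat.gcd_rec 8 u]
    rcases hu8 with h | h | h | h <;> rw [h] <;> decide
  obtain ⟨r, hr8, hru⟩ := Nat.chineseRemainder hcop 7 v
  have hr8' : r % 8 = 7 := by have : r % 8 = 7 % 8 := hr8; omega
  have hr8c : Nat.Coprime r 8 := by
    have : Nat.gcd 8 r = 1 := by rw [Nat.gcd_rec 8 r, hr8']; decide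
    exact Nat.coprime_comm.mp this
  have hruc : Nat.Coprime r u := by
    have h1' : r % u = v % u := hru
    have huv : Nat.gcd u r = 1 := by
      rw [Nat.gcd_rec u r, h1', ← Nat.gcd_rec u v]
      exact hvu.symm
    exact Nat.coprime_comm.mp huv
  refine lub_E d₀ (8 * u) r (by positivity) ⟨2 * u, by ring⟩
    (Nat.Coprime.mul_right hr8c hruc) (by omega) ?_
  intro p hp hpr
  have hp8 : p % 8 = 7 := by
    have h8 : p % 8 = r % 8 := hpr.of_dvd ⟨u, rfl⟩
    omega
  have hpu : p ≡ v [MOD u] := (hpr.of_dvd ⟨8, by ring⟩).trans hru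
  have hJpu : jacobiSym (p : ℤ) u = τ := by
    have hmm : (p : ℤ) % (u : ℤ) = ((v : ℕ) : ℤ) % (u : ℤ) := by
      have h1' : p % u = v % u := hpu
      exact_mod_cast congrArg (Nat.cast : ℕ → ℤ) h1'
    rw [jacobiSym.mod_left' hmm]
    exact hv
  exact H p hp hp8 hJpu

private theorem lub_B (d₀ : ℤ) (hsf : Squarefree d₀) (hne : d₀ ≠ -1) :
    {q : ℕ | q.Prime ∧ q % 4 = 3 ∧ jacobiSym d₀ q = 1}.Infinite := by
  have hd0 : d₀ ≠ 0 := hsf.ne_zero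
  rcases Int.even_or_odd d₀ with he | ho
  · -- even case : d₀ = 2 * k with k odd
    obtain ⟨k, hk⟩ := he
    have hm : d₀ = 2 * k := by omega
    have hko : Odd k := by
      rcases Int.even_or_odd k with ⟨j, hj⟩ | h
      · exfalso
        have : IsUnit (2 : ℤ) := hsf 2 ⟨j, by omega⟩
        rw [Int.isUnit_iff] at this; omega
      · exact h
    have hkd : k ∣ d₀ := ⟨2, by rw [hm]; ring⟩
    have hksf : Squarefree k := hsf.squarefree_of_dvd hkd
    set u := k.natAbs with hudef
    have hu0 : u ≠ 0 := by simp [hudef]; intro h; rw [h] at hm; simp [hm] at hd0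
    have husf : Squarefree u := Int.squarefree_natAbs.mpr hksf
    have huodd : Odd u := Int.natAbs_odd.mpr hko
    rcases Int.natAbs_eq k with hks | hks <;> rw [← hudef] at hks
    · -- k = u, d₀ = 2u
      rcases eq_or_lt_of_le (by omega : 1 ≤ u) with hu1 | hu1
      · -- u = 1 : d₀ = 2
        have hd2 : d₀ = 2 := by rw [hm, hks, ← hu1]; norm_num
        subst hd2
        refine lub_E 2 8 7 (by norm_num) ⟨2, rfl⟩ (by decide) (by norm_num) ?_
        intro p hp hpr
        have hp8 : p % 8 = 7 := by have : p % 8 = 7 % 8 := hpr; omega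
        have hp2 : p % 2 = 1 := by omega
        rw [jacobiSym.at_two (Nat.odd_iff.mpr hp2), ZMod.χ₈_nat_eq_if_mod_eight]
        simp [hp2, hp8]
      · -- u > 1 : d₀ = 2u
        have hu4 : u % 4 = 1 ∨ u % 4 = 3 := by have := Nat.odd_iff.mp huodd; omega
        rcases hu4 with hu4 | hu4
        · refine lub_W d₀ u huodd hu1 husf 1 (Or.inl rfl) ?_
          intro p hp hp8 hJ
          have hp2 : p % 2 = 1 := by omega
          have hpodd : Odd p := Nat.odd_iff.mpr hp2
          rw [hm, hks, jacobiSym.mul_left,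
            jacobiSym.at_two hpodd, ZMod.χ₈_nat_eq_if_mod_eight,
            jacobiSym.quadratic_reciprocity_one_mod_four hu4 hpodd, hJ]
          simp [hp2, hp8]
        · refine lub_W d₀ u huodd hu1 husf (-1) (Or.inr rfl) ?_
          intro p hp hp8 hJ
          have hp2 : p % 2 = 1 := by omega
          have hp4 : p % 4 = 3 := by omega
          have hpodd : Odd p := Nat.odd_iff.mpr hp2
          rw [hm, hks, jacobiSym.mul_left,
            jacobiSym.at_two hpodd, ZMod.χ₈_nat_eq_if_mod_eight,
            jacobiSym.quadratic_reciprocity_three_mod_four hu4 hp4, hJ]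
          simp [hp2, hp8]
    · -- k = -u, d₀ = -2u
      rcases eq_or_lt_of_le (by omega : 1 ≤ u) with hu1 | hu1
      · -- u = 1 : d₀ = -2
        have hd2 : d₀ = -2 := by rw [hm, hks, ← hu1]; norm_num
        subst hd2
        refine lub_E (-2) 8 3 (by norm_num) ⟨2, rfl⟩ (by decide) (by norm_num) ?_
        intro p hp hpr
        have hp8 : p % 8 = 3 := by have : p % 8 = 3 % 8 := hpr; omega
        have hp2 : p % 2 = 1 := by omega
        rw [jacobiSym.at_neg_two (Nat.odd_iff.mpr hp2), ZMod.χ₈'_nat_eq_if_mod_eight]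
        simp [hp2, hp8]
      · -- u > 1 : d₀ = -2u
        have hu4 : u % 4 = 1 ∨ u % 4 = 3 := by have := Nat.odd_iff.mp huodd; omega
        have hmm : d₀ = 2 * (-1) * (u : ℤ) := by rw [hm, hks]; ring
        rcases hu4 with hu4 | hu4
        · refine lub_W d₀ u huodd hu1 husf (-1) (Or.inr rfl) ?_
          intro p hp hp8 hJ
          have hp2 : p % 2 = 1 := by omega
          have hp4 : p % 4 = 3 := by omega
          have hpodd : Odd p := Nat.odd_iff.mpr hp2
          rw [hmm, jacobiSym.mul_left, jacobiSym.mul_left,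
            jacobiSym.at_two hpodd, ZMod.χ₈_nat_eq_if_mod_eight,
            jacobiSym.at_neg_one hpodd, ZMod.χ₄_nat_three_mod_four hp4,
            jacobiSym.quadratic_reciprocity_one_mod_four hu4 hpodd, hJ]
          simp [hp2, hp8]
        · refine lub_W d₀ u huodd hu1 husf 1 (Or.inl rfl) ?_
          intro p hp hp8 hJ
          have hp2 : p % 2 = 1 := by omega
          have hp4 : p % 4 = 3 := by omega
          have hpodd : Odd p := Nat.odd_iff.mpr hp2
          rw [hmm, jacobiSym.mul_left, jacobiSym.mul_left,
            jacobiSym.at_two hpodd, ZMod.χ₈_nat_eq_if_mod_eight,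
            jacobiSym.at_neg_one hpodd, ZMod.χ₄_nat_three_mod_four hp4,
            jacobiSym.quadratic_reciprocity_three_mod_four hu4 hp4, hJ]
          simp [hp2, hp8]
  · -- odd case
    set u := d₀.natAbs with hudef
    have hu0 : u ≠ 0 := by simpa [hudef] using hd0
    have husf : Squarefree u := Int.squarefree_natAbs.mpr hsf
    have huodd : Odd u := Int.natAbs_odd.mpr ho
    rcases Int.natAbs_eq d₀ with hks | hks <;> rw [← hudef] at hks
    · -- d₀ = u
      rcases eq_or_lt_of_le (by omega : 1 ≤ u) with hu1 | hu1
      · -- u = 1 : d₀ = 1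
        have hd1 : d₀ = 1 := by rw [hks, ← hu1]; norm_num
        subst hd1
        refine lub_E 1 4 3 (by norm_num) ⟨1, rfl⟩ (by decide) (by norm_num) ?_
        intro p hp hpr
        simp
      · have hu4 : u % 4 = 1 ∨ u % 4 = 3 := by have := Nat.odd_iff.mp huodd; omega
        rcases hu4 with hu4 | hu4
        · refine lub_W d₀ u huodd hu1 husf 1 (Or.inl rfl) ?_
          intro p hp hp8 hJ
          have hpodd : Odd p := Nat.odd_iff.mpr (by omega)
          rw [hks, jacobiSym.quadratic_reciprocity_one_mod_four hu4 hpodd, hJ]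
        · refine lub_W d₀ u huodd hu1 husf (-1) (Or.inr rfl) ?_
          intro p hp hp8 hJ
          have hp4 : p % 4 = 3 := by omega
          rw [hks, jacobiSym.quadratic_reciprocity_three_mod_four hu4 hp4, hJ]
          ring
    · -- d₀ = -u
      rcases eq_or_lt_of_le (by omega : 1 ≤ u) with hu1 | hu1
      · exfalso; apply hne; rw [hks, ← hu1]; norm_num
      · have hu4 : u % 4 = 1 ∨ u % 4 = 3 := by have := Nat.odd_iff.mp huodd; omega
        have hmm : d₀ = (-1) * (u : ℤ) := by rw [hks]; ring
        rcases hu4 with hu4 | hu4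
        · refine lub_W d₀ u huodd hu1 husf (-1) (Or.inr rfl) ?_
          intro p hp hp8 hJ
          have hp4 : p % 4 = 3 := by omega
          have hpodd : Odd p := Nat.odd_iff.mpr (by omega)
          rw [hmm, jacobiSym.mul_left, jacobiSym.at_neg_one hpodd,
            ZMod.χ₄_nat_three_mod_four hp4,
            jacobiSym.quadratic_reciprocity_one_mod_four hu4 hpodd, hJ]
          ring
        · refine lub_W d₀ u huodd hu1 husf 1 (Or.inl rfl) ?_
          intro p hp hp8 hJ
          have hp4 : p % 4 = 3 := by omega
          have hpodd : Odd p := Nat.odd_iff.mpr (by omega)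
          rw [hmm, jacobiSym.mul_left, jacobiSym.at_neg_one hpodd,
            ZMod.χ₄_nat_three_mod_four hp4,
            jacobiSym.quadratic_reciprocity_three_mod_four hu4 hp4, hJ]
          ring

private theorem lub_A (d : ℤ) (hd0 : d ≠ 0) (hd : ¬∃ k : ℤ, d = -k ^ 2) :
    {q : ℕ | q.Prime ∧ q % 4 = 3 ∧ (d : ZMod q) ≠ 0 ∧ IsSquare ((d : ZMod q))}.Infinite := by
  obtain ⟨u0, e0, hfac, hsf0⟩ := Nat.sq_mul_squarefree d.natAbs
  have he0 : e0 ≠ 0 := by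
    rintro rfl; simp at hfac
    exact hd0 (Int.natAbs_eq_zero.mp hfac.symm)
  obtain ⟨d₁, hd₁, hsf₁, hne₁⟩ :
      ∃ d₁ : ℤ, d = (e0 : ℤ) ^ 2 * d₁ ∧ Squarefree d₁ ∧ d₁ ≠ -1 := by
    rcases Int.natAbs_eq d with hds | hds
    · refine ⟨(u0 : ℤ), by rw [hds, ← hfac]; push_cast; ring, ?_, ?_⟩
      · rw [← Int.squarefree_natAbs]; simpa using hsf0
      · intro h
        have : (0:ℤ) ≤ (u0:ℤ) := Int.natCast_nonneg u0
        omega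
    · refine ⟨-(u0 : ℤ), by rw [hds, ← hfac]; push_cast; ring, ?_, ?_⟩
      · rw [← Int.squarefree_natAbs]; simpa using hsf0
      · intro h
        have hu1 : u0 = 1 := by exact_mod_cast (by omega : (u0:ℤ) = 1)
        exact hd ⟨e0, by rw [hds, ← hfac, hu1]; push_cast; ring⟩
  have hB := lub_B d₁ hsf₁ hne₁
  have hfin : {q : ℕ | q ∣ 2 * e0}.Finite :=
    Set.Finite.subset (Set.finite_Iic (2 * e0)) fun q hq => Nat.le_of_dvd (by omega) hq
  refine ((hB.diff hfin).mono ?_)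
  rintro q ⟨⟨hq, hq4, hJ⟩, hnd⟩
  simp only [Set.mem_setOf_eq] at hnd ⊢
  haveI : Fact q.Prime := ⟨hq⟩
  haveI : NeZero q := ⟨hq.ne_zero⟩
  have hqe : ¬ q ∣ e0 := fun h => hnd (h.mul_left 2)
  have hge : Int.gcd (e0 : ℤ) (q:ℤ) = 1 := by
    rw [Int.gcd_natCast_natCast]
    exact Nat.coprime_comm.mp ((hq.coprime_iff_not_dvd).mpr hqe)
  have hJe : jacobiSym ((e0:ℤ)^2) q = 1 := by
    rw [show ((e0:ℤ)^2) = (e0:ℤ)^(2:ℕ) from rfl, jacobiSym.pow_left]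
    rcases jacobiSym.eq_one_or_neg_one hge with h | h <;> rw [h] <;> norm_num
  have hJd : jacobiSym d q = 1 := by
    rw [hd₁, jacobiSym.mul_left, hJe, hJ]; ring
  have hgd : Int.gcd d (q:ℤ) = 1 := by
    by_contra h
    have := jacobiSym.eq_zero_iff_not_coprime.mpr h
    rw [hJd] at this; norm_num at this
  have hq0 : (d : ZMod q) ≠ 0 := by
    intro h
    rw [ZMod.intCast_zmod_eq_zero_iff_dvd] at h
    have h2 : q ∣ d.natAbs := Int.natCast_dvd.mp h
    have h3 : q ∣ Int.gcd d (q:ℤ) := Nat.dvd_gcd h2 (by simp)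
    rw [hgd] at h3
    exact hq.ne_one (Nat.dvd_one.mp h3)
  have hsq : IsSquare (d : ZMod q) :=
    (legendreSym.eq_one_iff q hq0).mp
      (by rw [jacobiSym.legendreSym.to_jacobiSym]; exact hJd)
  exact ⟨hq, hq4, hq0, hsq⟩

theorem lubelski (a b c : ℤ) (hd : ¬∃ k : ℤ, b ^ 2 - 4 * a * c = -k ^ 2) :
    {q : ℕ | q.Prime ∧ q % 4 = 3 ∧ ∃ n : ℤ, (q : ℤ) ∣ a * n ^ 2 + b * n + c}.Infinite := by
  have hd0 : b ^ 2 - 4 * a * c ≠ 0 := fun h => hd ⟨0, by rw [h]; ring⟩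
  rcases eq_or_ne a 0 with rfl | ha
  · -- linear case
    have hb : b ≠ 0 := by rintro rfl; simp at hd0
    have hinf := Nat.infinite_setOfPred_prime_and_eq_mod (q := 4) (a := ((3:ℕ) : ZMod 4))
      (by decide)
    have hfin : {q : ℕ | q ∣ b.natAbs}.Finite :=
      Set.Finite.subset (Set.finite_Iic b.natAbs)
        fun q hq => Nat.le_of_dvd (Int.natAbs_pos.mpr hb) hq
    refine ((hinf.diff hfin).mono ?_)
    rintro q ⟨⟨hq, hq3⟩, hnd⟩
    simp only [Set.mem_setOf_eq] at hnd ⊢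
    have hq4 : q % 4 = 3 := by
      have h2 : q % 4 = 3 % 4 := (ZMod.natCast_eq_natCast_iff q 3 4).mp hq3
      omega
    refine ⟨hq, hq4, ?_⟩
    haveI : Fact q.Prime := ⟨hq⟩
    have hbq : ((b : ℤ) : ZMod q) ≠ 0 := by
      intro h
      rw [ZMod.intCast_zmod_eq_zero_iff_dvd] at h
      exact hnd (Int.natCast_dvd.mp h)
    obtain ⟨n, hn⟩ := ZMod.intCast_surjective
      ((-((c:ℤ) : ZMod q)) * (((b:ℤ) : ZMod q))⁻¹)
    refine ⟨n, ?_⟩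
    rw [← ZMod.intCast_zmod_eq_zero_iff_dvd]
    push_cast
    rw [hn]
    field_simp
    ring
  · -- quadratic case
    have hA := lub_A (b ^ 2 - 4 * a * c) hd0 hd
    have hfin : {q : ℕ | q ∣ 2 * a.natAbs}.Finite :=
      Set.Finite.subset (Set.finite_Iic (2 * a.natAbs))
        fun q hq => Nat.le_of_dvd (by have := Int.natAbs_pos.mpr ha; omega) hq
    refine ((hA.diff hfin).mono ?_)
    rintro q ⟨⟨hq, hq4, hq0, hsq⟩, hnd⟩
    simp only [Set.mem_setOf_eq] at hnd ⊢
    refine ⟨hq, hq4, ?_⟩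
    haveI : Fact q.Prime := ⟨hq⟩
    obtain ⟨x, hx⟩ := hsq
    have hq2 : ((2:ℤ) : ZMod q) ≠ 0 := by
      intro h
      rw [ZMod.intCast_zmod_eq_zero_iff_dvd] at h
      have h2 : q ∣ 2 := by exact_mod_cast h
      have : q = 2 := (Nat.prime_dvd_prime_iff_eq hq Nat.prime_two).mp h2
      omega
    have hq2' : ((2: ZMod q)) ≠ 0 := by
      intro h; apply hq2; push_cast; exact h
    have haq : ((a:ℤ) : ZMod q) ≠ 0 := by
      intro h
      rw [ZMod.intCast_zmod_eq_zero_iff_dvd] at h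
      exact hnd ((Int.natCast_dvd.mp h).mul_left 2)
    have h2A : ((2*a : ℤ) : ZMod q) ≠ 0 := by
      push_cast
      exact mul_ne_zero hq2' haq
    obtain ⟨n, hn⟩ := ZMod.intCast_surjective
      ((x - ((b:ℤ) : ZMod q)) * (((2*a : ℤ) : ZMod q))⁻¹)
    refine ⟨n, ?_⟩
    rw [← ZMod.intCast_zmod_eq_zero_iff_dvd]
    have key : ((4*a : ℤ) : ZMod q) * ((a*n^2+b*n+c : ℤ) : ZMod q)
        = ((2*a*n+b : ℤ) : ZMod q)^2 - ((b^2-4*a*c : ℤ) : ZMod q) := by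
      push_cast; ring
    have h2an : ((2*a*n+b : ℤ) : ZMod q) = x := by
      have hcancel : ((2*a : ℤ) : ZMod q) *
          ((x - ((b:ℤ) : ZMod q)) * (((2*a : ℤ) : ZMod q))⁻¹) = x - ((b:ℤ) : ZMod q) := by
        rw [mul_comm ((x - ((b:ℤ) : ZMod q))) ((((2*a : ℤ) : ZMod q))⁻¹)]
        rw [← mul_assoc, mul_inv_cancel₀ h2A, one_mul]
      calc ((2*a*n+b : ℤ) : ZMod q)
          = ((2*a : ℤ) : ZMod q) * ((n:ℤ) : ZMod q) + ((b:ℤ) : ZMod q) := by push_cast; ring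
        _ = x := by rw [hn, hcancel]; ring
    have key2 : ((4*a : ℤ) : ZMod q) * ((a*n^2+b*n+c : ℤ) : ZMod q) = 0 := by
      rw [key, h2an, hx]; ring
    have h4a : ((4*a : ℤ) : ZMod q) ≠ 0 := by
      push_cast
      have h4 : (4 : ZMod q) = 2 * 2 := by norm_num
      rw [h4]
      exact mul_ne_zero (mul_ne_zero hq2' hq2') haq
    exact (mul_eq_zero.mp key2).resolve_left h4a
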